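/- Let X₁, ..., X_N be independent centered sub-exponential random variables and K = max_i ‖X_i‖_{ψ₁}. Then for every ε ≥ 0, P{|Σ_{i=1}^N X_i| ≥ ε N} ≤ 2 exp(−c min(ε²/K², ε/K) N) for an absolute constant c > 0. -/

import Mathlib

open MeasureTheory ProbabilityTheory

/-- The sub-exponential norm `‖X‖_{ψ₁} = sup_{p ≥ 1} p⁻¹ (E|X|^p)^{1/p}`. -/
noncomputable def subExpNorm {Ω : Type*} [MeasurableSpace Ω] (μ : Measure Ω) (X : Ω → ℝ) : ℝ :=
  sSup {y : ℝ | ∃ p : ℝ, 1 ≤ p ∧ y = p⁻¹ * (∫ ω, |X ω| ^ p ∂μ) ^ (1/p)}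

/-- A real random variable is sub-exponential if all its moments are finite and its
sub-exponential norm is finite (the defining supremum is attained over a bounded set). -/
def IsSubExponential {Ω : Type*} [MeasurableSpace Ω] (μ : Measure Ω) (X : Ω → ℝ) : Prop :=
  (∀ p : ℝ, 1 ≤ p → Integrable (fun ω => |X ω| ^ p) μ) ∧
  BddAbove {y : ℝ | ∃ p : ℝ, 1 ≤ p ∧ y = p⁻¹ * (∫ ω, |X ω| ^ p ∂μ) ^ (1/p)}

lemma aux_moment {Ω : Type*} [MeasurableSpace Ω] (μ : Measure Ω) (X : Ω → ℝ)
    (hX : IsSubExponential μ X) {K : ℝ} (hK0 : 0 ≤ K) (hK : subExpNorm μ X ≤ K)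
    (n : ℕ) (hn : 1 ≤ n) : ∫ ω, |X ω| ^ n ∂μ ≤ (K * n) ^ n := by
  have hp : (1:ℝ) ≤ (n:ℝ) := by exact_mod_cast hn
  have hnpos : (0:ℝ) < (n:ℝ) := by linarith
  set I := ∫ ω, |X ω| ^ (n:ℝ) ∂μ with hI
  have hmem : (n:ℝ)⁻¹ * I ^ (1/(n:ℝ)) ∈
      {y : ℝ | ∃ p : ℝ, 1 ≤ p ∧ y = p⁻¹ * (∫ ω, |X ω| ^ p ∂μ) ^ (1/p)} := ⟨n, hp, rfl⟩
  have hle : (n:ℝ)⁻¹ * I ^ (1/(n:ℝ)) ≤ K := le_trans (le_csSup hX.2 hmem) hK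
  have hI0 : 0 ≤ I := integral_nonneg fun ω => Real.rpow_nonneg (abs_nonneg _) _
  have h1 : I ^ (1/(n:ℝ)) ≤ K * n := by
    rw [inv_mul_le_iff₀ hnpos] at hle
    linarith [hle]
  have h2 : (I ^ (1/(n:ℝ))) ^ (n:ℝ) ≤ (K * n) ^ (n:ℝ) :=
    Real.rpow_le_rpow (Real.rpow_nonneg hI0 _) h1 hnpos.le
  rw [← Real.rpow_mul hI0, one_div, inv_mul_cancel₀ hnpos.ne', Real.rpow_one] at h2
  rw [← Real.rpow_natCast (K * n) n]
  calc ∫ ω, |X ω| ^ n ∂μ = I := by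
        rw [hI]; exact integral_congr_ae (Filter.Eventually.of_forall fun ω => by
          simp [Real.rpow_natCast])
    _ ≤ _ := h2
lemma aux_mgf {Ω : Type*} [MeasurableSpace Ω] (μ : Measure Ω) [IsProbabilityMeasure μ]
    (X : Ω → ℝ) (hXm : Measurable X)
    {K : ℝ} (hK : 0 < K)
    (hInt : ∀ n : ℕ, Integrable (fun ω => |X ω| ^ n) μ)
    (hmom : ∀ n : ℕ, 1 ≤ n → ∫ ω, |X ω| ^ n ∂μ ≤ (K * n) ^ n)
    (hmean : ∫ ω, X ω ∂μ = 0)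
    {t : ℝ} (ht : 0 ≤ t) (hq : Real.exp 1 * t * K ≤ 1/2) :
    Integrable (fun ω => Real.exp (t * X ω)) μ ∧
      ∫ ω, Real.exp (t * X ω) ∂μ ≤ Real.exp (2 * (Real.exp 1 * t * K)^2) := by
  classical
  set q : ℝ := Real.exp 1 * t * K with hqdef
  have hq0 : 0 ≤ q := by positivity
  have hq1 : q < 1 := lt_of_le_of_lt hq (by norm_num)
  -- the terms of the exponential series
  set f : ℕ → Ω → ℝ := fun n ω => (t * |X ω|) ^ n / n.factorial with hfdef
  have hf_eq : ∀ n, f n = fun ω => (t ^ n / n.factorial) * |X ω| ^ n := by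
    intro n; funext ω; simp [hfdef, mul_pow]; ring
  have hf_nonneg : ∀ n ω, 0 ≤ f n ω := fun n ω => by
    simp only [hfdef]; positivity
  have hf_int : ∀ n, Integrable (f n) μ := fun n => by
    rw [hf_eq n]; exact (hInt n).const_mul _
  have hf_ival : ∀ n, ∫ ω, f n ω ∂μ = (t ^ n / n.factorial) * ∫ ω, |X ω| ^ n ∂μ := by
    intro n
    conv_lhs => rw [show (fun ω => f n ω) = fun ω => (t ^ n / n.factorial) * |X ω| ^ n from hf_eq n]
    exact integral_const_mul _ _
  have hf_le : ∀ n, ∫ ω, f n ω ∂μ ≤ q ^ n := by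
    intro n
    rcases Nat.eq_zero_or_pos n with h0 | h1
    · subst h0; simp [hf_ival]
    · rw [hf_ival]
      have h2 : ∫ ω, |X ω| ^ n ∂μ ≤ (K * n) ^ n := hmom n h1
      have h3 : (t ^ n / n.factorial) * ∫ ω, |X ω| ^ n ∂μ
          ≤ (t ^ n / n.factorial) * (K * n) ^ n := by
        apply mul_le_mul_of_nonneg_left h2 (by positivity)
      refine h3.trans ?_
      have h4 : ((n:ℝ) ^ n / n.factorial) ≤ Real.exp 1 ^ n := by
        have h5 := Real.pow_div_factorial_le_exp (x := (n:ℝ)) (Nat.cast_nonneg n) n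
        have h6 : Real.exp ((n:ℝ)) = Real.exp 1 ^ n := by
          rw [← Real.exp_nat_mul, mul_one]
        rw [h6] at h5; exact h5
      calc (t ^ n / n.factorial) * (K * n) ^ n
          = (t * K) ^ n * ((n:ℝ) ^ n / n.factorial) := by rw [mul_pow, mul_pow]; ring
        _ ≤ (t * K) ^ n * Real.exp 1 ^ n := by
            apply mul_le_mul_of_nonneg_left h4 (by positivity)
        _ = q ^ n := by rw [hqdef]; ring
  have hf_ige : ∀ n, 0 ≤ ∫ ω, f n ω ∂μ := fun n =>
    integral_nonneg fun ω => hf_nonneg n ω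
  have hgeom : Summable fun n : ℕ => q ^ n := summable_geometric_of_lt_one hq0 hq1
  -- pointwise: tsum of f is exp (t|X|)
  have hpt : ∀ ω, ∑' n, f n ω = Real.exp (t * |X ω|) := by
    intro ω
    rw [Real.exp_eq_exp_ℝ, NormedSpace.exp_eq_tsum_div]
  have hsummable_pt : ∀ ω, Summable fun n => f n ω := fun ω =>
    Real.summable_pow_div_factorial _
  -- lintegral bound
  have hmeasf : ∀ n, Measurable (f n) := by
    intro n; rw [hf_eq n]
    exact (measurable_const.mul ((hXm.abs).pow_const n))
  have hlin : ∑' n, ∫⁻ ω, ‖f n ω‖₊ ∂μ ≠ ⊤ := by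
    have heq : ∀ n, ∫⁻ ω, ‖f n ω‖₊ ∂μ = ENNReal.ofReal (∫ ω, f n ω ∂μ) := by
      intro n
      rw [MeasureTheory.ofReal_integral_eq_lintegral_ofReal (hf_int n)
        (Filter.Eventually.of_forall fun ω => hf_nonneg n ω)]
      exact lintegral_congr fun ω => (Real.enorm_eq_ofReal (hf_nonneg n ω)).symm ▸ rfl
    have hle : ∑' n, ∫⁻ ω, ‖f n ω‖₊ ∂μ ≤ ∑' n : ℕ, ENNReal.ofReal (q ^ n) := by
      rw [funext heq] at *
      exact ENNReal.tsum_le_tsum fun n => ENNReal.ofReal_le_ofReal (hf_le n)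
    refine ne_top_of_le_ne_top ?_ hle
    rw [← ENNReal.ofReal_tsum_of_nonneg (fun n => by positivity) hgeom]
    exact ENNReal.ofReal_ne_top
  -- integrability of exp (t |X|)
  have hIntAbs : Integrable (fun ω => Real.exp (t * |X ω|)) μ := by
    constructor
    · exact ((measurable_const.mul hXm.abs).exp).aestronglyMeasurable
    · rw [hasFiniteIntegral_iff_ofReal (Filter.Eventually.of_forall fun ω =>
        (Real.exp_pos _).le)]
      have : ∀ ω, ENNReal.ofReal (Real.exp (t * |X ω|)) = ∑' n, ENNReal.ofReal (f n ω) := by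
        intro ω
        rw [← hpt ω, ENNReal.ofReal_tsum_of_nonneg (fun n => hf_nonneg n ω) (hsummable_pt ω)]
      rw [lintegral_congr this, lintegral_tsum fun n =>
        ((hmeasf n).ennreal_ofReal).aemeasurable]
      have : ∀ n, ∫⁻ ω, ENNReal.ofReal (f n ω) ∂μ = ∫⁻ ω, ‖f n ω‖₊ ∂μ :=
        fun n => lintegral_congr fun ω => ((Real.enorm_eq_ofReal (hf_nonneg n ω))).symm
      rw [funext this]
      exact hlin.lt_top
  -- value: integral of exp(t|X|) as a series
  have hval : ∫ ω, Real.exp (t * |X ω|) ∂μ = ∑' n, ∫ ω, f n ω ∂μ := by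
    rw [← integral_tsum (fun n => (hmeasf n).aestronglyMeasurable) hlin]
    exact integral_congr_ae (Filter.Eventually.of_forall fun ω => (hpt ω).symm)
  -- integrability of exp (t X)
  have hIntX : Integrable (fun ω => Real.exp (t * X ω)) μ := by
    refine hIntAbs.mono' ((measurable_const.mul hXm).exp).aestronglyMeasurable ?_
    refine Filter.Eventually.of_forall fun ω => ?_
    rw [Real.norm_eq_abs, abs_of_pos (Real.exp_pos _)]
    exact Real.exp_le_exp.mpr (mul_le_mul_of_nonneg_left (le_abs_self _) ht)
  refine ⟨hIntX, ?_⟩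
  -- |X| integrable
  have hIntAbs1 : Integrable (fun ω => |X ω|) μ := by
    have := hInt 1; simpa using this
  -- pointwise bound: exp u ≤ 1 + u + (exp |u| - 1 - |u|)
  have hptle : ∀ ω, Real.exp (t * X ω) ≤ t * X ω +
      (Real.exp (t * |X ω|) - t * |X ω|) := by
    intro ω
    set u := t * X ω with hu
    have habs : t * |X ω| = |u| := by rw [hu, abs_mul, abs_of_nonneg ht]
    rw [habs]
    rcases le_or_gt 0 u with h | h
    · rw [abs_of_nonneg h]; linarith
    · rw [abs_of_neg h]
      have hs := Real.sinh_lt_self_iff.mpr h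
      rw [Real.sinh_eq] at hs
      linarith
  -- integrate
  have hXint : Integrable X μ := by
    refine hIntAbs1.mono' hXm.aestronglyMeasurable (Filter.Eventually.of_forall fun ω => ?_)
    simp [Real.norm_eq_abs]
  set a : ℕ → ℝ := fun n => ∫ ω, f n ω ∂μ with hadef
  have hsummA : Summable a := Summable.of_nonneg_of_le hf_ige hf_le hgeom
  have ha0 : a 0 = 1 := by simp [hadef, hf_ival]
  have ha1 : a 1 = t * ∫ ω, |X ω| ∂μ := by simp [hadef, hf_ival]
  have hsplit : ∑' n, a n = a 0 + (a 1 + ∑' n, a (n+2)) := by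
    rw [Summable.tsum_eq_zero_add hsummA, Summable.tsum_eq_zero_add ((summable_nat_add_iff 1).mpr hsummA)]
  have hgeom2 : Summable (fun n : ℕ => q ^ (n+2)) := (summable_nat_add_iff 2).mpr hgeom
  have hsummA2 : Summable (fun n : ℕ => a (n+2)) := (summable_nat_add_iff 2).mpr hsummA
  have hT : ∑' n : ℕ, a (n+2) ≤ 2 * q ^ 2 := by
    have h1 : ∑' n : ℕ, a (n+2) ≤ ∑' n : ℕ, q ^ (n+2) :=
      Summable.tsum_le_tsum (fun n => hf_le (n+2)) hsummA2 hgeom2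
    have h2 : ∑' n : ℕ, q ^ (n+2) = q ^ 2 * (1 - q)⁻¹ := by
      have h5 : ∀ n : ℕ, q ^ (n+2) = q ^ 2 * q ^ n := fun n => by ring
      rw [funext h5, tsum_mul_left, tsum_geometric_of_lt_one hq0 hq1]
    have h3 : (1 - q)⁻¹ ≤ 2 := by
      rw [inv_le_comm₀ (by linarith) (by norm_num)]
      linarith
    have h4 : q ^ 2 * (1 - q)⁻¹ ≤ q ^ 2 * 2 := by nlinarith [sq_nonneg q]
    nlinarith [h1, h2, h4]
  have hmain : ∫ ω, Real.exp (t * X ω) ∂μ ≤ 1 + 2 * q ^ 2 := by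
    have h1 : ∫ ω, Real.exp (t * X ω) ∂μ ≤
        ∫ ω, (t * X ω + (Real.exp (t * |X ω|) - t * |X ω|)) ∂μ := by
      apply integral_mono hIntX _ hptle
      exact (hXint.const_mul t).add (hIntAbs.sub (hIntAbs1.const_mul t))
    have h2 : ∫ ω, (t * X ω + (Real.exp (t * |X ω|) - t * |X ω|)) ∂μ
        = t * ∫ ω, X ω ∂μ +
          (∫ ω, Real.exp (t * |X ω|) ∂μ - t * ∫ ω, |X ω| ∂μ) := by
      have hsubint : Integrable (fun ω => Real.exp (t * |X ω|) - t * |X ω|) μ :=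
        hIntAbs.sub (hIntAbs1.const_mul t)
      have htXint : Integrable (fun ω => t * X ω) μ := hXint.const_mul t
      rw [integral_add htXint hsubint, integral_sub hIntAbs (hIntAbs1.const_mul t),
        integral_const_mul, integral_const_mul]
    rw [h2, hmean, hval, hsplit, ha0, ha1] at h1
    linarith [h1, hT]
  have hfin : (1 : ℝ) + 2 * q ^ 2 ≤ Real.exp (2 * q ^ 2) := by
    have := Real.add_one_le_exp (2 * q ^ 2)
    linarith
  linarith [hmain, hfin]
lemma aux_onesided {Ω : Type*} [MeasurableSpace Ω] (μ : Measure Ω) [IsProbabilityMeasure μ]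
    {N : ℕ} (X : Fin N → Ω → ℝ) (hXm : ∀ i, Measurable (X i))
    (hind : iIndepFun X μ)
    {t B a : ℝ} (ht : 0 ≤ t) (hB : 0 ≤ B)
    (hint : ∀ i, Integrable (fun ω => Real.exp (t * X i ω)) μ)
    (hmgf : ∀ i, ∫ ω, Real.exp (t * X i ω) ∂μ ≤ Real.exp B) :
    μ {ω | a ≤ ∑ i, X i ω} ≤ ENNReal.ofReal (Real.exp (-t * a + B * N)) := by
  have hSint : Integrable (fun ω => Real.exp (t * (∑ i, X i) ω)) μ :=
    hind.integrable_exp_mul_sum hXm (fun i _ => hint i)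
  have h := measure_ge_le_exp_mul_mgf (μ := μ) (X := ∑ i, X i) a ht hSint
  have hmgfS : mgf (∑ i, X i) μ t ≤ Real.exp (B * N) := by
    rw [hind.mgf_sum hXm Finset.univ]
    calc ∏ i, mgf (X i) μ t ≤ ∏ _i : Fin N, Real.exp B := by
          apply Finset.prod_le_prod (fun i _ => mgf_nonneg) (fun i _ => hmgf i)
      _ = Real.exp B ^ N := by simp
      _ = Real.exp (B * N) := by rw [← Real.exp_nat_mul]; ring_nf
  have hset : {ω | a ≤ ∑ i, X i ω} = {ω | a ≤ (∑ i, X i) ω} := by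
    ext ω; simp [Finset.sum_apply]
  rw [hset]
  have h2 : (μ {ω | a ≤ (∑ i, X i) ω}).toReal ≤ Real.exp (-t * a + B * N) := by
    calc (μ {ω | a ≤ (∑ i, X i) ω}).toReal ≤ Real.exp (-t * a) * mgf (∑ i, X i) μ t := h
      _ ≤ Real.exp (-t * a) * Real.exp (B * N) :=
          mul_le_mul_of_nonneg_left hmgfS (Real.exp_pos _).le
      _ = Real.exp (-t * a + B * N) := (Real.exp_add _ _).symm
  calc μ {ω | a ≤ (∑ i, X i) ω}
      = ENNReal.ofReal ((μ {ω | a ≤ (∑ i, X i) ω}).toReal) :=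
        (ENNReal.ofReal_toReal (measure_ne_top _ _)).symm
    _ ≤ _ := ENNReal.ofReal_le_ofReal h2

/-- Bernstein's inequality for sub-exponential random variables, Vershynin
Cor. 5.17: there is an absolute constant `c > 0` such that for independent centered
sub-exponential `X₁, …, X_N` with `K = max_i ‖X_i‖_{ψ₁}`, for every `ε ≥ 0`,
`P(|Σ X_i| ≥ ε N) ≤ 2 exp(-c min(ε²/K², ε/K) N)`. -/
theorem stmt_10 :
    ∃ c : ℝ, 0 < c ∧
      ∀ (Ω : Type) (_ : MeasurableSpace Ω) (μ : Measure Ω), IsProbabilityMeasure μ →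
        ∀ (N : ℕ), 0 < N →
        ∀ (X : Fin N → Ω → ℝ), (∀ i, Measurable (X i)) →
        iIndepFun X μ →
        (∀ i, IsSubExponential μ (X i)) →
        (∀ i, ∫ ω, X i ω ∂μ = 0) →
        ∀ (K : ℝ), 0 < K → (∀ i, subExpNorm μ (X i) ≤ K) →
        ∀ ε : ℝ, 0 ≤ ε →
          μ {ω | |∑ i, X i ω| ≥ ε * N}
            ≤ ENNReal.ofReal (2 * Real.exp (-c * min (ε^2 / K^2) (ε / K) * N)) := by
  refine ⟨1/60, by norm_num, ?_⟩
  intro Ω _ μ hprob N hN X hXm hind hsub hmean K hK hnorm ε hε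
  set e : ℝ := Real.exp 1 with hedef
  have he0 : 0 < e := Real.exp_pos 1
  have he : e < 2.7182818286 := Real.exp_one_lt_d9
  have he1 : 1 < e := by nlinarith [Real.add_one_le_exp 1]
  set t : ℝ := min (ε / (4 * e^2 * K^2)) (1 / (2 * e * K)) with htdef
  have ht0 : 0 ≤ t := le_min (by positivity) (by positivity)
  have htK : e * t * K ≤ 1/2 := by
    have h1 : t ≤ 1 / (2 * e * K) := min_le_right _ _
    calc e * t * K ≤ e * (1 / (2 * e * K)) * K := by
          apply mul_le_mul_of_nonneg_right (mul_le_mul_of_nonneg_left h1 he0.le) hK.le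
      _ = 1/2 := by field_simp
  -- integrability of |X i|^n
  have hIntn : ∀ i (n : ℕ), Integrable (fun ω => |X i ω| ^ n) μ := by
    intro i n
    rcases Nat.eq_zero_or_pos n with h0 | h1
    · subst h0; simp only [pow_zero]; exact integrable_const 1
    · have := (hsub i).1 (n : ℝ) (by exact_mod_cast h1)
      refine this.congr (Filter.Eventually.of_forall fun ω => ?_)
      simp [Real.rpow_natCast]
  -- moment bounds
  have hmom : ∀ i (n : ℕ), 1 ≤ n → ∫ ω, |X i ω| ^ n ∂μ ≤ (K * n) ^ n :=
    fun i n hn => aux_moment μ (X i) (hsub i) hK.le (hnorm i) n hn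
  -- mgf bounds for X i
  have hmgfP := fun i => aux_mgf μ (X i) (hXm i) hK (hIntn i) (hmom i) (hmean i) ht0 htK
  -- mgf bounds for -X i
  have hmgfN := fun i => aux_mgf μ (fun ω => -X i ω) (hXm i).neg hK
    (fun n => (hIntn i n).congr (Filter.Eventually.of_forall fun ω => by simp))
    (fun n hn => by
      calc ∫ ω, |-X i ω| ^ n ∂μ = ∫ ω, |X i ω| ^ n ∂μ := by
            apply integral_congr_ae (Filter.Eventually.of_forall fun ω => by simp)
        _ ≤ (K * n) ^ n := hmom i n hn)
    (by rw [integral_neg, hmean i, neg_zero]) ht0 htK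
  -- independence of the negated family
  have hindN : iIndepFun (fun i => fun ω => -X i ω) μ := by
    have := hind.comp (fun _ => (Neg.neg : ℝ → ℝ)) (fun _ => measurable_neg)
    exact this
  set B : ℝ := 2 * (e * t * K)^2 with hBdef
  have hB0 : 0 ≤ B := by positivity
  have hA := aux_onesided μ X hXm hind (a := ε * N) ht0 hB0
    (fun i => (hmgfP i).1) (fun i => (hmgfP i).2)
  have hB2 := aux_onesided μ (fun i ω => -X i ω) (fun i => (hXm i).neg) hindN
    (a := ε * N) ht0 hB0 (fun i => (hmgfN i).1) (fun i => (hmgfN i).2)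
  -- exponent bound
  set m : ℝ := min (ε^2 / K^2) (ε / K) with hmdef
  have hm0 : 0 ≤ m := le_min (by positivity) (by positivity)
  have hexpo : -t * (ε * N) + B * N ≤ -(1/60) * m * N := by
    have h4 : t * (4 * e^2 * K^2) ≤ ε := by
      have := min_le_left (ε / (4 * e^2 * K^2)) (1 / (2 * e * K))
      rw [← le_div_iff₀ (by positivity)]
      exact this
    have h2q : B ≤ t * ε / 2 := by
      have : B = (t * (4 * e^2 * K^2)) * t / 2 := by rw [hBdef]; ring
      rw [this]
      have := mul_le_mul_of_nonneg_right h4 ht0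
      linarith
    have hlow : (1/60) * m ≤ t * ε / 2 := by
      rcases le_total (ε / (4 * e^2 * K^2)) (1 / (2 * e * K)) with hc | hc
      · have htval : t = ε / (4 * e^2 * K^2) := min_eq_left hc
        have hm1 : m ≤ ε^2 / K^2 := min_le_left _ _
        have key : (1/60) * (ε^2 / K^2) ≤ ε / (4 * e^2 * K^2) * ε / 2 := by
          have hr1 : (1/60) * (ε^2 / K^2) = ε^2 / (60 * K^2) := by ring
          have hr2 : ε / (4 * e^2 * K^2) * ε / 2 = ε^2 / (8 * e^2 * K^2) := by ring
          rw [hr1, hr2]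
          gcongr
          nlinarith [hK, he0, he]
        calc (1/60) * m ≤ (1/60) * (ε^2 / K^2) := by nlinarith
          _ ≤ ε / (4 * e^2 * K^2) * ε / 2 := key
          _ = t * ε / 2 := by rw [htval]
      · have htval : t = 1 / (2 * e * K) := min_eq_right hc
        have hm1 : m ≤ ε / K := min_le_right _ _
        have key : (1/60) * (ε / K) ≤ 1 / (2 * e * K) * ε / 2 := by
          have hr1 : (1/60) * (ε / K) = ε / (60 * K) := by ring
          have hr2 : 1 / (2 * e * K) * ε / 2 = ε / (4 * e * K) := by ring
          rw [hr1, hr2]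
          gcongr
          nlinarith [hK, he0, he]
        calc (1/60) * m ≤ (1/60) * (ε / K) := by nlinarith
          _ ≤ 1 / (2 * e * K) * ε / 2 := key
          _ = t * ε / 2 := by rw [htval]
    have hstep : -t * ε + B ≤ -(1/60) * m := by linarith
    have hNn : (0:ℝ) ≤ (N:ℝ) := Nat.cast_nonneg N
    calc -t * (ε * N) + B * N = (-t * ε + B) * N := by ring
      _ ≤ (-(1/60) * m) * N := mul_le_mul_of_nonneg_right hstep hNn
      _ = -(1/60) * m * N := by ring
  -- union bound
  have hsubset : {ω | |∑ i, X i ω| ≥ ε * N} ⊆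
      {ω | ε * N ≤ ∑ i, X i ω} ∪ {ω | ε * N ≤ ∑ i, -X i ω} := by
    intro ω hω
    simp only [Set.mem_setOf_eq, ge_iff_le] at hω
    rcases le_abs.mp hω with h | h
    · exact Or.inl h
    · refine Or.inr ?_
      simpa [Finset.sum_neg_distrib] using h
  calc μ {ω | |∑ i, X i ω| ≥ ε * N}
      ≤ μ ({ω | ε * N ≤ ∑ i, X i ω} ∪ {ω | ε * N ≤ ∑ i, -X i ω}) := measure_mono hsubset
    _ ≤ μ {ω | ε * N ≤ ∑ i, X i ω} + μ {ω | ε * N ≤ ∑ i, -X i ω} := measure_union_le _ _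
    _ ≤ ENNReal.ofReal (Real.exp (-t * (ε * N) + B * N)) +
        ENNReal.ofReal (Real.exp (-t * (ε * N) + B * N)) := add_le_add hA hB2
    _ = ENNReal.ofReal (2 * Real.exp (-t * (ε * N) + B * N)) := by
        rw [← ENNReal.ofReal_add (Real.exp_pos _).le (Real.exp_pos _).le]; ring_nf
    _ ≤ ENNReal.ofReal (2 * Real.exp (-(1/60) * m * N)) := by
        apply ENNReal.ofReal_le_ofReal
        have := Real.exp_le_exp.mpr hexpo
        linarith
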